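/- Let Φ be a Hausdorff topological space with a bornology 𝔹 stable under inclusions, and let S(t) be a semigroup with each S(t) continuous, possessing a compact attracting set 𝓑 that itself belongs to 𝔹. Then the attractor 𝓐 satisfies the representation formula 𝓐 = { u(0) : u is a complete bounded trajectory }, where a complete bounded trajectory is a map u : ℝ → Φ with S(t)u(h) = u(t+h) for all t ≥ 0, h ∈ ℝ, and whose range {u(t) : t ∈ ℝ} belongs to 𝔹. -/
import Mathlib


open Set Filter Topology

/-- The ω-limit set of `B` under the semigroup `S`:
`ω(B) = ⋂_{T ≥ 0} closure (⋃_{t ≥ T} S(t)B)`. -/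
def omegaLimitSet {Φ : Type*} [TopologicalSpace Φ] (S : ℝ → Φ → Φ) (B : Set Φ) : Set Φ :=
  ⋂ T ∈ Ici (0 : ℝ), closure (⋃ t ∈ Ici T, S t '' B)

/-- `K` attracts `B` under the semigroup `S`: for every open neighbourhood `O` of `K`
there is `T ≥ 0` with `S(t)B ⊆ O` for all `t ≥ T`. -/
def Attracts {Φ : Type*} [TopologicalSpace Φ] (S : ℝ → Φ → Φ) (K B : Set Φ) : Prop :=
  ∀ O : Set Φ, IsOpen O → K ⊆ O → ∃ T : ℝ, 0 ≤ T ∧ ∀ t ≥ T, S t '' B ⊆ O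

/-- Representation formula for the attractor: if the bornology `𝔹` is stable under
inclusions, all maps `S(t)` are continuous, and there is a compact attracting set `𝓑`
which itself belongs to `𝔹`, then the attractor `𝓐` coincides with the set of values at
time `0` of all complete bounded trajectories. -/
theorem stmt_6 {Φ : Type*} [TopologicalSpace Φ] [T2Space Φ]
    (S : ℝ → Φ → Φ)
    (hS0 : S 0 = id)
    (hSadd : ∀ t s : ℝ, 0 ≤ t → 0 ≤ s → S (t + s) = S t ∘ S s)
    (hcont : ∀ t : ℝ, 0 ≤ t → Continuous (S t))
    (𝔹 : Set (Set Φ)) (h𝔹 : ∀ B ∈ 𝔹, B.Nonempty)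
    (h𝔹incl : ∀ B ∈ 𝔹, ∀ B₁ : Set Φ, B₁ ⊆ B → B₁.Nonempty → B₁ ∈ 𝔹)
    (𝓑 : Set Φ) (h𝓑 : IsCompact 𝓑) (h𝓑mem : 𝓑 ∈ 𝔹)
    (hattr : ∀ B ∈ 𝔹, Attracts S 𝓑 B)
    (𝓐 : Set Φ)
    (h𝓐c : IsCompact 𝓐)
    (h𝓐attr : ∀ B ∈ 𝔹, Attracts S 𝓐 B)
    (h𝓐min : ∀ K : Set Φ, IsCompact K → (∀ B ∈ 𝔹, Attracts S K B) → 𝓐 ⊆ K) :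
    𝓐 = {x : Φ | ∃ u : ℝ → Φ,
      (∀ t : ℝ, 0 ≤ t → ∀ h : ℝ, S t (u h) = u (t + h)) ∧
      Set.range u ∈ 𝔹 ∧ u 0 = x} := by
  classical
  -- basic facts
  have h𝓑ne : 𝓑.Nonempty := h𝔹 𝓑 h𝓑mem
  have h𝓐sub𝓑 : 𝓐 ⊆ 𝓑 := h𝓐min 𝓑 h𝓑 hattr
  have h𝓐ne : 𝓐.Nonempty := by
    by_contra hne
    rw [Set.not_nonempty_iff_eq_empty] at hne
    obtain ⟨T, hT, hT2⟩ := h𝓐attr 𝓑 h𝓑mem ∅ isOpen_empty (by simp [hne])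
    obtain ⟨b, hb⟩ := h𝓑ne
    exact hT2 T le_rfl ⟨b, hb, rfl⟩
  have h𝓐𝔹 : 𝓐 ∈ 𝔹 := h𝔹incl 𝓑 h𝓑mem 𝓐 h𝓐sub𝓑 h𝓐ne
  -- membership from all open neighborhoods
  have hmem : ∀ x : Φ, (∀ O : Set Φ, IsOpen O → 𝓐 ⊆ O → x ∈ O) → x ∈ 𝓐 := by
    intro x hx
    by_contra hxA
    obtain ⟨U, V, hU, hV, hAU, hxV, hdis⟩ := h𝓐c.separation_of_notMem hxA
    exact absurd (hx U hU hAU) (fun hxU => hdis.ne_of_mem hxU hxV rfl)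
  -- 𝓐 ⊆ S t '' 𝓐 for all t ≥ 0 (minimality applied to the image)
  have hback : ∀ t : ℝ, 0 ≤ t → 𝓐 ⊆ S t '' 𝓐 := by
    intro t ht
    refine h𝓐min _ (h𝓐c.image (hcont t ht)) ?_
    intro B hB O hO hKO
    have hpre : IsOpen (S t ⁻¹' O) := hO.preimage (hcont t ht)
    have h𝓐pre : 𝓐 ⊆ S t ⁻¹' O := fun a ha => hKO ⟨a, ha, rfl⟩
    obtain ⟨T, hT0, hT⟩ := h𝓐attr B hB _ hpre h𝓐pre
    refine ⟨T + t, by linarith, fun r hr => ?_⟩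
    have hrt : r = t + (r - t) := by ring
    rw [hrt, hSadd t (r - t) ht (by linarith)]
    rintro y ⟨b, hb, rfl⟩
    exact hT (r - t) (by linarith) ⟨b, hb, rfl⟩
  -- forward invariance
  have hfwd : ∀ t : ℝ, 0 ≤ t → S t '' 𝓐 ⊆ 𝓐 := by
    rintro t ht y ⟨a, ha, rfl⟩
    apply hmem
    intro O hO hAO
    obtain ⟨T, hT0, hT⟩ := h𝓐attr 𝓐 h𝓐𝔹 O hO hAO
    obtain ⟨b, hb, hba⟩ := hback T hT0 ha
    have : S t a = S (t + T) b := by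
      rw [hSadd t T ht hT0, Function.comp_apply, hba]
    rw [this]
    exact hT (t + T) (by linarith) ⟨b, hb, rfl⟩
  ext x
  constructor
  · -- construct a complete bounded trajectory through x
    intro hx
    have hS1 : ∀ y : 𝓐, ∃ z : 𝓐, S 1 z.1 = y.1 := by
      rintro ⟨y, hy⟩
      obtain ⟨z, hz, hzy⟩ := hback 1 one_pos.le hy
      exact ⟨⟨z, hz⟩, hzy⟩
    choose g hg using hS1
    set xs : ℕ → 𝓐 := fun n => g^[n] ⟨x, hx⟩ with hxsdef
    have hxs : ∀ n : ℕ, S 1 (xs (n + 1)).1 = (xs n).1 := by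
      intro n
      have h1 : xs (n + 1) = g (xs n) := Function.iterate_succ_apply' g n _
      rw [h1]; exact hg (xs n)
    -- coherence of backward continuations
    have key : ∀ (n k : ℕ) (s : ℝ), 0 ≤ s + n →
        S (s + n + k) (xs (n + k)).1 = S (s + n) (xs n).1 := by
      intro n k
      induction k with
      | zero => intro s _; simp
      | succ k ih =>
        intro s hs
        have hk : (0 : ℝ) ≤ s + n + k := by
          have := Nat.cast_nonneg (α := ℝ) k; linarith
        have h1 : (s + n + (k + 1 : ℕ) : ℝ) = (s + n + k) + 1 := by push_cast; ring
        have h2 : (n + (k + 1) : ℕ) = (n + k) + 1 := rfl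
        rw [h1, h2, hSadd (s + n + k) 1 hk one_pos.le, Function.comp_apply,
          hxs (n + k)]
        exact ih s hs
    have key2 : ∀ (n m : ℕ) (s : ℝ), 0 ≤ s + n → 0 ≤ s + m →
        S (s + n) (xs n).1 = S (s + m) (xs m).1 := by
      intro n m s hn hm
      rcases le_total n m with h | h
      · obtain ⟨k, rfl⟩ := Nat.exists_eq_add_of_le h
        have := key n k s hn
        rw [← this]; congr 1; push_cast; ring
      · obtain ⟨k, rfl⟩ := Nat.exists_eq_add_of_le h
        have := key m k s hm
        rw [← this]; congr 1; push_cast; ring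
    set u : ℝ → Φ := fun t => S (t + (⌈-t⌉₊ : ℕ)) (xs ⌈-t⌉₊).1 with hudef
    have hnn : ∀ t : ℝ, 0 ≤ t + (⌈-t⌉₊ : ℕ) := by
      intro t
      have := Nat.le_ceil (-t)
      linarith
    refine ⟨u, ?_, ?_, ?_⟩
    · intro t ht h
      have h1 : S t (u h) = S (t + (h + (⌈-h⌉₊ : ℕ))) (xs ⌈-h⌉₊).1 := by
        rw [hSadd t (h + (⌈-h⌉₊ : ℕ)) ht (hnn h)]; rfl
      have h2 : t + (h + (⌈-h⌉₊ : ℕ)) = (t + h) + (⌈-h⌉₊ : ℕ) := by ring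
      rw [h1, h2, key2 ⌈-h⌉₊ ⌈-(t + h)⌉₊ (t + h) (by have := hnn h; linarith)
        (hnn (t + h))]
    · refine h𝔹incl 𝓐 h𝓐𝔹 _ ?_ ⟨u 0, Set.mem_range_self 0⟩
      rintro y ⟨t, rfl⟩
      exact hfwd (t + (⌈-t⌉₊ : ℕ)) (hnn t) ⟨(xs ⌈-t⌉₊).1, (xs ⌈-t⌉₊).2, rfl⟩
    · show S ((0 : ℝ) + (⌈-(0 : ℝ)⌉₊ : ℕ)) (xs ⌈-(0 : ℝ)⌉₊).1 = x
      norm_num [hS0, hxsdef]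
  · -- u 0 lies in 𝓐 for every complete bounded trajectory u
    rintro ⟨u, hu, hrange, hu0⟩
    subst hu0
    apply hmem
    intro O hO hAO
    obtain ⟨T, hT0, hT⟩ := h𝓐attr (Set.range u) hrange O hO hAO
    have h1 : u 0 ∈ S T '' Set.range u := by
      refine ⟨u (0 - T), Set.mem_range_self _, ?_⟩
      rw [hu T hT0 (0 - T)]; norm_num
    exact hT T le_rfl h1
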